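/- Let f_W be any three-layer ReLU network on ℝ^d with path-norm with bias PN_b(W) ≤ 1. Then f_W can be written as a convex combination of the constant function 1 and functions from the class G_{3L} consisting of all functions of the form x ↦ ± ReLU( ∑_{j=1}^{m1} w_j ReLU(⟨θ_j,x⟩ − b_j) + w_0 ) with ∑_{j=1}^{m1} |w_j| ‖(θ_j,b_j)‖₂ + |w_0| ≤ 1. -/

import Mathlib

noncomputable section

/-- `ReLU(t) = max(t, 0)`. -/
def relu (t : ℝ) : ℝ := max t 0

/-- A three-layer ReLU neural network with weights
`W = ((θ_j, b_j)_j, (W_{i,j})_{i=1..m2, j=0..m1}, (w_i)_{i=0..m2})`. -/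
structure ThreeLayerNet (d : ℕ) where
  m1 : ℕ
  m2 : ℕ
  θ : Fin m1 → EuclideanSpace ℝ (Fin d)
  b : Fin m1 → ℝ
  W : Fin m2 → Fin m1 → ℝ
  W0 : Fin m2 → ℝ
  w : Fin m2 → ℝ
  w0 : ℝ

/-- The function computed by a three-layer ReLU network. -/
def ThreeLayerNet.eval {d : ℕ} (N : ThreeLayerNet d) (x : EuclideanSpace ℝ (Fin d)) : ℝ :=
  ∑ i, N.w i * relu (∑ j, N.W i j * relu ((inner ℝ (N.θ j) x : ℝ) - N.b j) + N.W0 i) + N.w0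

/-- The path-norm with bias of a three-layer ReLU network. -/
def ThreeLayerNet.pnB {d : ℕ} (N : ThreeLayerNet d) : ℝ :=
  ∑ i, |N.w i| *
    (∑ j, |N.W i j| * Real.sqrt (‖N.θ j‖ ^ 2 + (N.b j) ^ 2) + |N.W0 i|) + |N.w0|

/-- Membership in the class `G_{3L}` of functions
`x ↦ ± ReLU(∑_j w_j ReLU(⟨θ_j,x⟩ − b_j) + w_0)` with
`∑_j |w_j| ‖(θ_j, b_j)‖₂ + |w_0| ≤ 1`. -/
def memG3L {d : ℕ} (g : EuclideanSpace ℝ (Fin d) → ℝ) : Prop :=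
  ∃ (m1 : ℕ) (s : ℝ) (w : Fin m1 → ℝ) (θ : Fin m1 → EuclideanSpace ℝ (Fin d))
    (b : Fin m1 → ℝ) (w0 : ℝ),
    (s = 1 ∨ s = -1) ∧
    (∑ j, |w j| * Real.sqrt (‖θ j‖ ^ 2 + (b j) ^ 2) + |w0| ≤ 1) ∧
    ∀ x, g x = s * relu (∑ j, w j * relu ((inner ℝ (θ j) x : ℝ) - b j) + w0)

lemma relu_zero : relu 0 = 0 := by simp [relu]

lemma memG3L_zero {d : ℕ} : memG3L (fun _ : EuclideanSpace ℝ (Fin d) => (0:ℝ)) := by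
  refine ⟨0, 1, fun j => 0, fun j => 0, fun j => 0, 0, Or.inl rfl, by simp, fun x => by
    simp [relu_zero]⟩

lemma memG3L_negone {d : ℕ} : memG3L (fun _ : EuclideanSpace ℝ (Fin d) => (-1:ℝ)) := by
  refine ⟨0, -1, fun j => 0, fun j => 0, fun j => 0, 1, Or.inr rfl, by simp, fun x => by
    simp [relu]⟩

/-- Any three-layer ReLU network of path-norm (with bias) at most one is a convex
combination of the constant function `1` and functions from `G_{3L}`. -/
theorem three_layer_convex_combination (d : ℕ) (N : ThreeLayerNet d) (hN : N.pnB ≤ 1) :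
    ∃ (n : ℕ) (a : Fin n → ℝ) (g : Fin n → (EuclideanSpace ℝ (Fin d) → ℝ)),
      (∀ i, 0 ≤ a i) ∧ (∑ i, a i = 1) ∧
      (∀ i, g i = (fun _ => (1 : ℝ)) ∨ memG3L (g i)) ∧
      ∀ x, N.eval x = ∑ i, a i * g i x := by
  classical
  set c : Fin N.m2 → ℝ := fun i =>
    ∑ j, |N.W i j| * Real.sqrt (‖N.θ j‖ ^ 2 + (N.b j) ^ 2) + |N.W0 i| with hc_def
  have hc0 : ∀ i, 0 ≤ c i := by
    intro i
    have : (0:ℝ) ≤ ∑ j, |N.W i j| * Real.sqrt (‖N.θ j‖ ^ 2 + (N.b j) ^ 2) :=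
      Finset.sum_nonneg fun j _ => mul_nonneg (abs_nonneg _) (Real.sqrt_nonneg _)
    have h2 := abs_nonneg (N.W0 i)
    simp only [hc_def]; linarith
  have hpnB : N.pnB = ∑ i, |N.w i| * c i + |N.w0| := rfl
  have hpnB0 : 0 ≤ N.pnB := by
    rw [hpnB]
    have : (0:ℝ) ≤ ∑ i, |N.w i| * c i :=
      Finset.sum_nonneg fun i _ => mul_nonneg (abs_nonneg _) (hc0 i)
    linarith [abs_nonneg N.w0]
  -- the inner functions
  set G : Fin N.m2 → (EuclideanSpace ℝ (Fin d) → ℝ) := fun i =>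
    if h : c i = 0 then (fun _ => 0)
    else fun x => (if N.w i < 0 then (-1:ℝ) else 1) *
      relu (∑ j, (N.W i j / c i) * relu ((inner ℝ (N.θ j) x : ℝ) - N.b j) + N.W0 i / c i)
    with hG_def
  refine ⟨N.m2 + 1 + 1,
    Fin.snoc (Fin.snoc (fun i => |N.w i| * c i) |N.w0|) (1 - N.pnB),
    Fin.snoc (Fin.snoc G (fun _ => if N.w0 < 0 then (-1:ℝ) else 1)) (fun _ => 0),
    ?_, ?_, ?_, ?_⟩
  · intro i
    refine Fin.lastCases ?_ (fun i => ?_) i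
    · simp only [Fin.snoc_last]; linarith
    refine Fin.lastCases ?_ (fun i => ?_) i
    · simp only [Fin.snoc_castSucc, Fin.snoc_last]; exact abs_nonneg _
    · simp only [Fin.snoc_castSucc]
      exact mul_nonneg (abs_nonneg _) (hc0 i)
  · rw [Fin.sum_univ_castSucc, Fin.sum_univ_castSucc]
    simp only [Fin.snoc_castSucc, Fin.snoc_last]
    rw [hpnB]; ring
  · intro i
    refine Fin.lastCases ?_ (fun i => ?_) i
    · simp only [Fin.snoc_last]; exact Or.inr memG3L_zero
    refine Fin.lastCases ?_ (fun i => ?_) i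
    · simp only [Fin.snoc_castSucc, Fin.snoc_last]
      by_cases h : N.w0 < 0
      · simp only [h, if_pos]; exact Or.inr memG3L_negone
      · simp only [h, if_neg, if_false]; exact Or.inl trivial
    · simp only [Fin.snoc_castSucc]
      right
      by_cases h : c i = 0
      · rw [hG_def]; simp only [h, dif_pos]; exact memG3L_zero
      · rw [hG_def]; simp only [h, dif_neg, dite_false]
        refine ⟨N.m1, (if N.w i < 0 then (-1:ℝ) else 1), fun j => N.W i j / c i, N.θ, N.b,
          N.W0 i / c i, ?_, ?_, fun x => rfl⟩
        · by_cases h' : N.w i < 0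
          · exact Or.inr (if_pos h')
          · exact Or.inl (if_neg h')
        · have hcpos : 0 < c i := lt_of_le_of_ne (hc0 i) (Ne.symm h)
          have : ∑ j, |N.W i j / c i| * Real.sqrt (‖N.θ j‖ ^ 2 + (N.b j) ^ 2)
              + |N.W0 i / c i| = c i / c i := by
            simp only [abs_div, abs_of_pos hcpos, div_mul_eq_mul_div, ← Finset.sum_div,
              ← add_div]
            rfl
          rw [this, div_self h]
  · intro x
    rw [Fin.sum_univ_castSucc, Fin.sum_univ_castSucc]
    simp only [Fin.snoc_castSucc, Fin.snoc_last]
    have hlast : (1 - N.pnB) * 0 = 0 := by ring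
    have hw0 : |N.w0| * (if N.w0 < 0 then (-1:ℝ) else 1) = N.w0 := by
      by_cases h : N.w0 < 0
      · simp [h, abs_of_neg h]
      · simp [h, abs_of_nonneg (not_lt.mp h)]
    have hterm : ∀ i : Fin N.m2, |N.w i| * c i * G i x =
        N.w i * relu (∑ j, N.W i j * relu ((inner ℝ (N.θ j) x : ℝ) - N.b j) + N.W0 i) := by
      intro i
      by_cases h : c i = 0
      · rw [hG_def]
        simp only [h, dif_pos]
        have hsum0 : ∑ j, |N.W i j| * Real.sqrt (‖N.θ j‖ ^ 2 + (N.b j) ^ 2) = 0 ∧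
            |N.W0 i| = 0 := by
          have h1 : (0:ℝ) ≤ ∑ j, |N.W i j| * Real.sqrt (‖N.θ j‖ ^ 2 + (N.b j) ^ 2) :=
            Finset.sum_nonneg fun j _ => mul_nonneg (abs_nonneg _) (Real.sqrt_nonneg _)
          have h2 := abs_nonneg (N.W0 i)
          have h3 : ∑ j, |N.W i j| * Real.sqrt (‖N.θ j‖ ^ 2 + (N.b j) ^ 2) + |N.W0 i| = 0 := h
          constructor <;> linarith
        have hW0 : N.W0 i = 0 := abs_eq_zero.mp hsum0.2
        have hterms : ∀ j ∈ Finset.univ,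
            N.W i j * relu ((inner ℝ (N.θ j) x : ℝ) - N.b j) = 0 := by
          intro j _
          have := (Finset.sum_eq_zero_iff_of_nonneg (fun j _ =>
            mul_nonneg (abs_nonneg (N.W i j)) (Real.sqrt_nonneg _))).mp hsum0.1 j
            (Finset.mem_univ j)
          rcases mul_eq_zero.mp this with hW | hs
          · rw [abs_eq_zero.mp hW, zero_mul]
          · have hsq : ‖N.θ j‖ ^ 2 + (N.b j) ^ 2 = 0 := by
              have hnn : (0:ℝ) ≤ ‖N.θ j‖ ^ 2 + (N.b j) ^ 2 := by positivity
              nlinarith [Real.sq_sqrt hnn, hs]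
            have hθ : N.θ j = 0 := by
              have : ‖N.θ j‖ ^ 2 = 0 := by nlinarith [sq_nonneg (N.b j), sq_nonneg ‖N.θ j‖]
              simpa using (pow_eq_zero_iff (n := 2) (by norm_num)).mp this
            have hb : N.b j = 0 := by nlinarith [sq_nonneg ‖N.θ j‖, sq_nonneg (N.b j)]
            simp [hθ, hb, relu_zero]
        rw [Finset.sum_eq_zero hterms, hW0]
        simp [relu_zero]
      · rw [hG_def]
        simp only [h, dif_neg, dite_false]
        have hcpos : 0 < c i := lt_of_le_of_ne (hc0 i) (Ne.symm h)
        have hscale : ∑ j, (N.W i j / c i) * relu ((inner ℝ (N.θ j) x : ℝ) - N.b j)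
            + N.W0 i / c i =
            (∑ j, N.W i j * relu ((inner ℝ (N.θ j) x : ℝ) - N.b j) + N.W0 i) / c i := by
          rw [add_div, Finset.sum_div]
          congr 1
          exact Finset.sum_congr rfl fun j _ => by rw [div_mul_eq_mul_div]
        rw [hscale]
        have hrelu : relu ((∑ j, N.W i j * relu ((inner ℝ (N.θ j) x : ℝ) - N.b j) + N.W0 i)
            / c i) = relu (∑ j, N.W i j * relu ((inner ℝ (N.θ j) x : ℝ) - N.b j) + N.W0 i)
            / c i := by
          unfold relu
          rw [show (0:ℝ) = 0 / c i by simp, max_div_div_right hcpos.le]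
          simp
        rw [hrelu]
        by_cases hw : N.w i < 0
        · simp only [hw, if_pos]
          rw [abs_of_neg hw]
          field_simp
        · simp only [hw, if_neg, if_false]
          rw [abs_of_nonneg (not_lt.mp hw)]
          field_simp
    rw [Finset.sum_congr rfl (fun i _ => hterm i), hlast, hw0]
    simp [ThreeLayerNet.eval]


end
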